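/- Let Ω ⊆ ℝ², let Z_T, Z_Λ : Ω → ℝ be differentiable, and let M_T, M_Λ > 0 be such that ‖∇Z_T(x)‖ ≤ M_T and ‖∇Z_Λ(x)‖ ≤ M_Λ for all x ∈ Ω. Then there exists a constant C > 0, depending only on M_T and M_Λ, such that for every ε > 0, if ‖∇Z_T(x) − ∇Z_Λ(x)‖ ≤ ε for all x ∈ Ω, then the Beltrami coefficients satisfy |μ_T(x) − μ_Λ(x)| ≤ Cε for all x ∈ Ω. -/

import Mathlib

set_option maxHeartbeats 4000000

noncomputable section

/-- Partial derivative of `Z : ℝ² → ℝ` in the `i`-th coordinate direction. -/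
def pd (Z : EuclideanSpace ℝ (Fin 2) → ℝ) (i : Fin 2) (x : EuclideanSpace ℝ (Fin 2)) : ℝ :=
  fderiv ℝ Z x (EuclideanSpace.single i 1)

/-- The Beltrami coefficient `μ = (E − G + 2iF)/(E + G + 2√(EG − F²))`. -/
def beltramiCoeff (E F G : ℝ) : ℂ :=
  (↑(E - G) + 2 * Complex.I * ↑F) / (↑(E + G) + 2 * ↑(Real.sqrt (E * G - F ^ 2)))

/-- The Beltrami coefficient of the graph surface of the height function `Z`,
built from `E = 1 + (∂ₓZ)²`, `F = (∂ₓZ)(∂_yZ)`, `G = 1 + (∂_yZ)²`. -/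
def muOf (Z : EuclideanSpace ℝ (Fin 2) → ℝ) (x : EuclideanSpace ℝ (Fin 2)) : ℂ :=
  beltramiCoeff (1 + pd Z 0 x ^ 2) (pd Z 0 x * pd Z 1 x) (1 + pd Z 1 x ^ 2)

/-- The partial derivatives are bounded by the operator norm of the derivative. -/
lemma pd_le (Z : EuclideanSpace ℝ (Fin 2) → ℝ) (x : EuclideanSpace ℝ (Fin 2)) (i : Fin 2) :
    |pd Z i x| ≤ ‖fderiv ℝ Z x‖ := by
  have h := (fderiv ℝ Z x).le_opNorm (EuclideanSpace.single i 1)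
  rw [EuclideanSpace.norm_single] at h
  simpa [pd, Real.norm_eq_abs] using h

/-- The difference of partial derivatives is bounded by the norm of the
difference of the derivatives. -/
lemma pd_sub_le (ZT ZΛ : EuclideanSpace ℝ (Fin 2) → ℝ) (x : EuclideanSpace ℝ (Fin 2))
    (i : Fin 2) (ε : ℝ) (h : ‖fderiv ℝ ZT x - fderiv ℝ ZΛ x‖ ≤ ε) :
    |pd ZT i x - pd ZΛ i x| ≤ ε := by
  have h2 := (fderiv ℝ ZT x - fderiv ℝ ZΛ x).le_opNorm (EuclideanSpace.single i 1)
  rw [EuclideanSpace.norm_single] at h2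
  simp only [ContinuousLinearMap.sub_apply, Real.norm_eq_abs] at h2
  calc |pd ZT i x - pd ZΛ i x| ≤ ‖fderiv ℝ ZT x - fderiv ℝ ZΛ x‖ * ‖(1:ℝ)‖ := h2
  _ ≤ ε := by simpa using h

lemma beltrami_lip (M ε p1 q1 p2 q2 : ℝ) (hM : 0 < M)
    (hp1 : |p1| ≤ M) (hq1 : |q1| ≤ M) (hp2 : |p2| ≤ M) (hq2 : |q2| ≤ M)
    (hεp : |p1 - p2| ≤ ε) (hεq : |q1 - q2| ≤ ε) :
    ‖beltramiCoeff (1 + p1^2) (p1*q1) (1 + q1^2)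
      - beltramiCoeff (1 + p2^2) (p2*q2) (1 + q2^2)‖ ≤ (4*M^3 + 2*M) * ε := by
  have hε0 : 0 ≤ ε := le_trans (abs_nonneg _) hεp
  set s1 := Real.sqrt (1 + p1^2 + q1^2) with hs1def
  set s2 := Real.sqrt (1 + p2^2 + q2^2) with hs2def
  have hsq1 : s1^2 = 1 + p1^2 + q1^2 := Real.sq_sqrt (by positivity)
  have hsq2 : s2^2 = 1 + p2^2 + q2^2 := Real.sq_sqrt (by positivity)
  have hs1nn : 0 ≤ s1 := Real.sqrt_nonneg _
  have hs2nn : 0 ≤ s2 := Real.sqrt_nonneg _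
  have hs1one : 1 ≤ s1 := by nlinarith [sq_nonneg p1, sq_nonneg q1]
  have hs2one : 1 ≤ s2 := by nlinarith [sq_nonneg p2, sq_nonneg q2]
  have hp1M : p1^2 ≤ M^2 := by nlinarith [sq_abs p1, abs_nonneg p1]
  have hq1M : q1^2 ≤ M^2 := by nlinarith [sq_abs q1, abs_nonneg q1]
  have hp2M : p2^2 ≤ M^2 := by nlinarith [sq_abs p2, abs_nonneg p2]
  have hq2M : q2^2 ≤ M^2 := by nlinarith [sq_abs q2, abs_nonneg q2]
  have hs1M : s1 ≤ 1 + M^2 := by nlinarith [sq_nonneg (s1 - (1 + M^2))]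
  -- square differences
  have hpp : |p1 + p2| ≤ 2*M := (abs_add_le p1 p2).trans (by linarith)
  have hqq : |q1 + q2| ≤ 2*M := (abs_add_le q1 q2).trans (by linarith)
  have hpd : |p1^2 - p2^2| ≤ ε * (2*M) := by
    calc |p1^2 - p2^2| = |p1 - p2| * |p1 + p2| := by rw [← abs_mul]; ring_nf
    _ ≤ ε * (2*M) := mul_le_mul hεp hpp (abs_nonneg _) hε0
  have hqd : |q1^2 - q2^2| ≤ ε * (2*M) := by
    calc |q1^2 - q2^2| = |q1 - q2| * |q1 + q2| := by rw [← abs_mul]; ring_nf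
    _ ≤ ε * (2*M) := mul_le_mul hεq hqq (abs_nonneg _) hε0
  -- sqrt difference
  have hsd : |s1 - s2| ≤ 2*M*ε := by
    have h1 : (s1 - s2) * (s1 + s2) = (p1^2 + q1^2) - (p2^2 + q2^2) := by
      linear_combination hsq1 - hsq2
    have hss : (0:ℝ) < s1 + s2 := by linarith
    have h2 : s1 - s2 = ((p1^2 + q1^2) - (p2^2 + q2^2)) / (s1 + s2) := by
      rw [eq_div_iff (ne_of_gt hss)]
      exact h1
    have hΔ : |(p1^2 + q1^2) - (p2^2 + q2^2)| ≤ 4*M*ε := by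
      calc |(p1^2 + q1^2) - (p2^2 + q2^2)| = |(p1^2 - p2^2) + (q1^2 - q2^2)| := by ring_nf
      _ ≤ |p1^2 - p2^2| + |q1^2 - q2^2| := abs_add_le _ _
      _ ≤ 4*M*ε := by linarith
    have key2 : 0 ≤ M*ε*(s1+s2-2) := mul_nonneg (mul_nonneg hM.le hε0) (by linarith)
    rw [h2, abs_div, abs_of_pos hss, div_le_iff₀ hss]
    nlinarith [key2]
  -- set up complex quantities
  set w1 : ℂ := (p1:ℂ) + (q1:ℂ) * Complex.I with hw1def
  set w2 : ℂ := (p2:ℂ) + (q2:ℂ) * Complex.I with hw2def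
  set d1 : ℝ := 2 + p1^2 + q1^2 + 2*s1 with hd1def
  set d2 : ℝ := 2 + p2^2 + q2^2 + 2*s2 with hd2def
  have hd1lb : (4:ℝ) ≤ d1 := by nlinarith [sq_nonneg p1, sq_nonneg q1]
  have hd2lb : (4:ℝ) ≤ d2 := by nlinarith [sq_nonneg p2, sq_nonneg q2]
  have hd1ub : d1 ≤ 4 + 4*M^2 := by nlinarith
  have hmu1 : beltramiCoeff (1 + p1^2) (p1*q1) (1 + q1^2) = w1^2 / (d1:ℂ) := by
    unfold beltramiCoeff
    rw [show (1+p1^2)*(1+q1^2) - (p1*q1)^2 = 1+p1^2+q1^2 by ring, ← hs1def]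
    congr 1
    · push_cast
      linear_combination (-(q1:ℂ)^2) * Complex.I_sq
    · push_cast [hd1def]
      ring
  have hmu2 : beltramiCoeff (1 + p2^2) (p2*q2) (1 + q2^2) = w2^2 / (d2:ℂ) := by
    unfold beltramiCoeff
    rw [show (1+p2^2)*(1+q2^2) - (p2*q2)^2 = 1+p2^2+q2^2 by ring, ← hs2def]
    congr 1
    · push_cast
      linear_combination (-(q2:ℂ)^2) * Complex.I_sq
    · push_cast [hd2def]
      ring
  have hd1ne : ((d1:ℝ):ℂ) ≠ 0 := Complex.ofReal_ne_zero.mpr (by linarith)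
  have hd2ne : ((d2:ℝ):ℂ) ≠ 0 := Complex.ofReal_ne_zero.mpr (by linarith)
  have hdiff : beltramiCoeff (1 + p1^2) (p1*q1) (1 + q1^2)
      - beltramiCoeff (1 + p2^2) (p2*q2) (1 + q2^2)
      = (w1^2 * (d2:ℂ) - w2^2 * (d1:ℂ)) / ((d1:ℂ) * (d2:ℂ)) := by
    rw [hmu1, hmu2]
    field_simp
  -- norm bounds
  have hw1b : ‖w1‖ ≤ 2*M := by
    calc ‖w1‖ ≤ ‖(p1:ℂ)‖ + ‖(q1:ℂ)*Complex.I‖ :=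
      norm_add_le _ _
    _ = |p1| + |q1| := by simp [Complex.norm_real, Real.norm_eq_abs]
    _ ≤ 2*M := by linarith
  have hw2b : ‖w2‖ ≤ 2*M := by
    calc ‖w2‖ ≤ ‖(p2:ℂ)‖ + ‖(q2:ℂ)*Complex.I‖ :=
      norm_add_le _ _
    _ = |p2| + |q2| := by simp [Complex.norm_real, Real.norm_eq_abs]
    _ ≤ 2*M := by linarith
  have hwd : ‖w1 - w2‖ ≤ 2*ε := by
    have : w1 - w2 = ((p1 - p2 : ℝ):ℂ) + ((q1 - q2 : ℝ):ℂ)*Complex.I := by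
      push_cast; ring
    rw [this]
    calc ‖_‖ ≤ ‖((p1-p2:ℝ):ℂ)‖ + ‖((q1-q2:ℝ):ℂ)*Complex.I‖ :=
      norm_add_le _ _
    _ = |p1-p2| + |q1-q2| := by
      rw [norm_mul, Complex.norm_I, mul_one, Complex.norm_real, Complex.norm_real, Real.norm_eq_abs, Real.norm_eq_abs]
    _ ≤ 2*ε := by linarith
  have hws : ‖w1 + w2‖ ≤ 4*M := by
    calc ‖w1 + w2‖ ≤ ‖w1‖ + ‖w2‖ := norm_add_le _ _
    _ ≤ 4*M := by linarith
  have hN1 : ‖w1^2‖ ≤ 4*M^2 := by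
    rw [norm_pow]
    nlinarith [norm_nonneg w1]
  have hNd : ‖w1^2 - w2^2‖ ≤ 8*M*ε := by
    have : w1^2 - w2^2 = (w1 - w2)*(w1 + w2) := by ring
    rw [this, norm_mul]
    nlinarith [norm_nonneg (w1 - w2), norm_nonneg (w1 + w2)]
  have hdd : |d2 - d1| ≤ 8*M*ε := by
    have := abs_sub_comm s1 s2
    have h1 := abs_le.mp hpd
    have h2 := abs_le.mp hqd
    have h3 := abs_le.mp hsd
    rw [abs_le]
    constructor <;> [skip; skip] <;> simp only [hd1def, hd2def] <;> nlinarith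
  -- final assembly
  rw [hdiff, norm_div, norm_mul, Complex.norm_real, Complex.norm_real, Real.norm_eq_abs, Real.norm_eq_abs,
    abs_of_pos (by linarith : (0:ℝ) < d1), abs_of_pos (by linarith : (0:ℝ) < d2)]
  have hT : ‖w1^2 * (d2:ℂ) - w2^2 * (d1:ℂ)‖ ≤ 16*(4*M^3+2*M)*ε := by
    have hsplit : w1^2 * (d2:ℂ) - w2^2 * (d1:ℂ)
        = w1^2 * ((d2:ℂ) - (d1:ℂ)) + (w1^2 - w2^2) * (d1:ℂ) := by ring
    calc ‖w1^2 * (d2:ℂ) - w2^2 * (d1:ℂ)‖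
        ≤ ‖w1^2 * ((d2:ℂ) - (d1:ℂ))‖ + ‖(w1^2 - w2^2) * (d1:ℂ)‖ := by
          rw [hsplit]; exact norm_add_le _ _
      _ = ‖w1^2‖ * |d2 - d1| + ‖w1^2 - w2^2‖ * d1 := by
          rw [norm_mul, norm_mul]
          rw [show ((d2:ℂ) - (d1:ℂ)) = ((d2 - d1 : ℝ):ℂ) by push_cast; ring]
          rw [Complex.norm_real, Complex.norm_real, Real.norm_eq_abs, Real.norm_eq_abs, abs_of_pos (by linarith : (0:ℝ) < d1)]
      _ ≤ 4*M^2*(8*M*ε) + 8*M*ε*(4+4*M^2) := by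
          have t1 : ‖w1^2‖ * |d2 - d1| ≤ 4*M^2*(8*M*ε) :=
            mul_le_mul hN1 hdd (abs_nonneg _) (by positivity)
          have t2 : ‖w1^2 - w2^2‖ * d1 ≤ 8*M*ε*(4+4*M^2) :=
            mul_le_mul hNd hd1ub (by linarith) (by positivity)
          linarith
      _ = 16*(4*M^3+2*M)*ε := by ring
  rw [div_le_iff₀ (mul_pos (by linarith : (0:ℝ) < d1) (by linarith : (0:ℝ) < d2))]
  have hC : 0 ≤ (4*M^3+2*M)*ε := by positivity
  have hd12 : (16:ℝ) ≤ d1*d2 := by nlinarith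
  have hfin : (4*M^3+2*M)*ε*16 ≤ (4*M^3+2*M)*ε*(d1*d2) := by
    exact mul_le_mul_of_nonneg_left hd12 hC
  linarith [hT]


/-- there is a constant `C > 0` depending only on the gradient
bounds `M_T`, `M_Λ` such that, whenever the gradients of the two height
functions are uniformly `ε`-close on `Ω`, the Beltrami coefficients of the two
graph surfaces are `Cε`-close on `Ω`. -/
theorem beltrami_coeff_close
    (MT MΛ : ℝ) (hMT : 0 < MT) (hMΛ : 0 < MΛ) :
    ∃ C > 0,
      ∀ (Ω : Set (EuclideanSpace ℝ (Fin 2)))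
        (ZT ZΛ : EuclideanSpace ℝ (Fin 2) → ℝ),
        (∀ x ∈ Ω, DifferentiableAt ℝ ZT x) →
        (∀ x ∈ Ω, DifferentiableAt ℝ ZΛ x) →
        (∀ x ∈ Ω, ‖fderiv ℝ ZT x‖ ≤ MT) →
        (∀ x ∈ Ω, ‖fderiv ℝ ZΛ x‖ ≤ MΛ) →
        ∀ ε > 0,
          (∀ x ∈ Ω, ‖fderiv ℝ ZT x - fderiv ℝ ZΛ x‖ ≤ ε) →
          ∀ x ∈ Ω, ‖muOf ZT x - muOf ZΛ x‖ ≤ C * ε := by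
  set M : ℝ := max MT MΛ with hMdef
  have hM : 0 < M := lt_max_of_lt_left hMT
  refine ⟨4*M^3 + 2*M, by positivity, ?_⟩
  intro Ω ZT ZΛ _ _ hBT hBΛ ε hε hclose x hx
  have hMT' : MT ≤ M := le_max_left _ _
  have hMΛ' : MΛ ≤ M := le_max_right _ _
  have hp1 : |pd ZT 0 x| ≤ M := (pd_le ZT x 0).trans ((hBT x hx).trans hMT')
  have hq1 : |pd ZT 1 x| ≤ M := (pd_le ZT x 1).trans ((hBT x hx).trans hMT')
  have hp2 : |pd ZΛ 0 x| ≤ M := (pd_le ZΛ x 0).trans ((hBΛ x hx).trans hMΛ')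
  have hq2 : |pd ZΛ 1 x| ≤ M := (pd_le ZΛ x 1).trans ((hBΛ x hx).trans hMΛ')
  have hεp : |pd ZT 0 x - pd ZΛ 0 x| ≤ ε := pd_sub_le ZT ZΛ x 0 ε (hclose x hx)
  have hεq : |pd ZT 1 x - pd ZΛ 1 x| ≤ ε := pd_sub_le ZT ZΛ x 1 ε (hclose x hx)
  exact beltrami_lip M ε (pd ZT 0 x) (pd ZT 1 x) (pd ZΛ 0 x) (pd ZΛ 1 x)
    hM hp1 hq1 hp2 hq2 hεp hεq
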